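/- In a Gomory–Hu tree H of G with weights w_H, for any edge set F ⊆ E(H), the union of the cuts U(e) in G over e ∈ F has w-weight at most Σ_{e∈F} w_H(e), and separates (in G) every pair of vertices that F separates in H. -/

import Mathlib

open scoped Classical

/-- The set of edges of `G` with exactly one endpoint in `S`. -/
noncomputable def boundary {V : Type*} [Fintype V] [DecidableEq V]
    (G : SimpleGraph V) (S : Set V) : Finset (Sym2 V) :=
  Finset.univ.filter (fun e => e ∈ G.edgeSet ∧ ∃ u ∈ S, ∃ v ∈ Sᶜ, e = s(u, v))

private lemma sum_biUnion_le_aux {V : Type*} [DecidableEq V] (w : Sym2 V → ℝ)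
    (hw : ∀ e, 0 ≤ w e) (U : Sym2 V → Finset (Sym2 V)) (F : Finset (Sym2 V)) :
    ∑ e ∈ F.biUnion U, w e ≤ ∑ e ∈ F, ∑ x ∈ U e, w x := by
  classical
  induction F using Finset.induction with
  | empty => simp
  | @insert a s hnotmem ih =>
    rw [Finset.biUnion_insert, Finset.sum_insert hnotmem]
    calc ∑ e ∈ U a ∪ s.biUnion U, w e
        ≤ ∑ e ∈ U a, w e + ∑ e ∈ s.biUnion U, w e := by
          rw [← Finset.sum_union_inter]
          have : 0 ≤ ∑ e ∈ U a ∩ s.biUnion U, w e :=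
            Finset.sum_nonneg fun e _ => hw e
          linarith
      _ ≤ ∑ e ∈ U a, w e + ∑ e ∈ s, ∑ x ∈ U e, w x := by linarith [ih]

/-- If `x` and `y` lie on the same side of each fundamental cut of each edge of `F`,
then `x` and `y` are still connected after deleting `F` from the tree `H`. -/
private lemma same_side_reachable {V : Type*} (H : SimpleGraph V) (hH : H.IsTree)
    (F : Finset (Sym2 V)) {x y : V} (p : H.Walk x y) (hp : p.IsPath)
    (hs : ∀ a b : V, H.Adj a b → s(a, b) ∈ F →
      ((H.deleteEdges {s(a, b)}).Reachable a x ↔ (H.deleteEdges {s(a, b)}).Reachable a y)) :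
    (H.deleteEdges ↑F).Reachable x y := by
  classical
  induction p with
  | nil => exact SimpleGraph.Reachable.refl _
  | @cons u v t h' q ih =>
    rw [SimpleGraph.Walk.cons_isPath_iff] at hp
    by_cases hmem : s(u, v) ∈ F
    · -- the edge s(u,v) is in F; derive a contradiction with the same-side hypothesis
      exfalso
      -- s(u,v) is a bridge in H
      have hbridge : ¬ (H.deleteEdges {s(u, v)}).Reachable u v := by
        have := (SimpleGraph.isAcyclic_iff_forall_edge_isBridge.mp hH.2) (H.mem_edgeSet.mpr h')
        exact SimpleGraph.isBridge_iff.mp this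
      -- q avoids the edge s(u,v) since u ∉ q.support
      have hq : ∀ e ∈ q.edges, e ∉ ({s(u, v)} : Set (Sym2 V)) := by
        intro e he hee
        rw [Set.mem_singleton_iff] at hee
        subst hee
        exact hp.2 (q.fst_mem_support_of_mem_edges he)
      have hvy : (H.deleteEdges {s(u, v)}).Reachable v t :=
        ⟨q.toDeleteEdges _ hq⟩
      have huy : (H.deleteEdges {s(u, v)}).Reachable u t :=
        ((hs u v h' hmem).mp (SimpleGraph.Reachable.refl _))
      exact hbridge (huy.trans hvy.symm)
    · -- the edge survives in H \ F
      have hadj : (H.deleteEdges ↑F).Adj u v := by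
        rw [SimpleGraph.deleteEdges_adj]
        exact ⟨h', by simpa using hmem⟩
      refine hadj.reachable.trans (ih hp.1 ?_)
      intro a b hab habF
      have huv : (H.deleteEdges {s(a, b)}).Reachable u v := by
        have : (H.deleteEdges {s(a, b)}).Adj u v := by
          rw [SimpleGraph.deleteEdges_adj]
          refine ⟨h', ?_⟩
          intro hc
          rw [Set.mem_singleton_iff] at hc
          rw [← hc] at habF
          exact hmem habF
        exact this.reachable
      constructor
      · intro hav
        exact (hs a b hab habF).mp (hav.trans huv.symm)
      · intro hay
        exact ((hs a b hab habF).mpr hay).trans huv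

/-- In a Gomory–Hu tree `H` of `G` (each tree edge `s(a,b)` corresponds to the
cut `U s(a,b)` of `G` given by the boundary of the side of `a` in `H - s(a,b)`,
of weight `wH s(a,b)`), for any `F ⊆ E(H)` the union of the cuts `U e`, `e ∈ F`,
has `w`-weight at most `∑_{e ∈ F} wH e` and separates in `G` every pair of
vertices that `F` separates in `H`. -/
theorem stmt17 {V : Type*} [Fintype V] [DecidableEq V] (G H : SimpleGraph V)
    (w wH : Sym2 V → ℝ) (hw : ∀ e, 0 ≤ w e) (hH : H.IsTree)
    (U : Sym2 V → Finset (Sym2 V))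
    (hside : ∀ a b : V, H.Adj a b →
      U s(a, b) = boundary G {v | (H.deleteEdges {s(a, b)}).Reachable a v} ∧
      ∑ e ∈ U s(a, b), w e = wH s(a, b))
    (F : Finset (Sym2 V)) (hF : ↑F ⊆ H.edgeSet) :
    (∑ e ∈ F.biUnion U, w e ≤ ∑ e ∈ F, wH e) ∧
    (∀ u v : V, ¬ (H.deleteEdges ↑F).Reachable u v →
      ¬ (G.deleteEdges ↑(F.biUnion U)).Reachable u v) := by
  constructor
  · -- weight bound
    refine (sum_biUnion_le_aux w hw U F).trans ?_
    refine Finset.sum_le_sum fun e he => ?_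
    induction e using Sym2.ind with
    | _ a b =>
      have hab : H.Adj a b := H.mem_edgeSet.mp (hF he)
      exact le_of_eq (hside a b hab).2
  · -- separation
    intro u v hsep hreach
    apply hsep
    -- any walk in G minus the union gives a walk in H minus F
    obtain ⟨p⟩ := hreach
    clear hsep
    induction p with
    | nil => exact SimpleGraph.Reachable.refl _
    | @cons x z t hxz q ih =>
      refine SimpleGraph.Reachable.trans ?_ ih
      -- x, z adjacent in G, with s(x,z) ∉ U e for all e ∈ F
      rw [SimpleGraph.deleteEdges_adj] at hxz
      obtain ⟨hGxz, hnot⟩ := hxz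
      -- get the same-side condition
      have hs : ∀ a b : V, H.Adj a b → s(a, b) ∈ F →
          ((H.deleteEdges {s(a, b)}).Reachable a x ↔
           (H.deleteEdges {s(a, b)}).Reachable a z) := by
        intro a b hab habF
        have hnotU : s(x, z) ∉ U s(a, b) := by
          intro hc
          exact hnot (by
            rw [Finset.coe_biUnion]
            exact Set.mem_biUnion (Finset.mem_coe.mpr habF) hc)
        rw [(hside a b hab).1] at hnotU
        simp only [boundary, Finset.mem_filter, Finset.mem_univ, true_and, not_and,
          not_exists] at hnotU
        have hnotU' := hnotU (G.mem_edgeSet.mpr hGxz)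
        constructor
        · intro hax
          by_contra haz
          exact (hnotU' x hax z haz) rfl
        · intro haz
          by_contra hax
          have := hnotU' z haz x hax
          exact this (Sym2.eq_swap)
      obtain ⟨p, hp, -⟩ := hH.existsUnique_path x z
      exact same_side_reachable H hH F p hp hs
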